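/- Let G be a finite simple graph, let ρ be a vertex of G, and let C be a subset of the vertices of G with ρ ∈ C. The number of consistent cuts of G[C] is odd if and only if the induced subgraph G[C] is connected; moreover, in that case the number of consistent cuts is exactly 1, namely the cut (C, ∅). -/

import Mathlib

/-- `(C1, C2)` is a consistent cut of the induced subgraph `G[C]` (with root `ρ`):
`C1` and `C2` are disjoint, their union is `C`, `ρ ∈ C1`, and no edge of `G`
joins a vertex of `C1` to a vertex of `C2`. -/
def IsConsistentCut {V : Type*} (G : SimpleGraph V) (ρ : V) (C C1 C2 : Set V) : Prop :=
  Disjoint C1 C2 ∧ C1 ∪ C2 = C ∧ ρ ∈ C1 ∧ ∀ u ∈ C1, ∀ v ∈ C2, ¬ G.Adj u v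

private theorem even_card_of_fpf_invol {α : Type*} [Finite α] (f : α → α)
    (hf : Function.Involutive f) (hfp : ∀ a, f a ≠ a) : Even (Nat.card α) := by
  classical
  have := Fintype.ofFinite α
  set g : Function.End α := f with hg
  have h2 : g ^ 2 ^ 1 = 1 := by
    funext a
    show f (f a) = a
    exact hf a
  have hmod := Equiv.Perm.card_fixedPoints_modEq (p := 2) (n := 1) h2
  have hempty : Function.fixedPoints g = ∅ := by
    ext a; simp [Function.IsFixedPt, hfp a, hg, Function.End]; exact hfp a
  have : Fintype.card (Function.fixedPoints g) = 0 := by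
    simp [hempty]
  rw [this] at hmod
  rw [Nat.card_eq_fintype_card, Nat.even_iff]
  simpa [Nat.ModEq] using hmod

/-- Membership in `C1` propagates along reachability in `G[C]`. -/
private theorem cut_propagate {V : Type*} {G : SimpleGraph V} {ρ : V} {C C1 C2 : Set V}
    (h : IsConsistentCut G ρ C C1 C2) {u v : C}
    (hr : (G.induce C).Reachable u v) (hu : (u : V) ∈ C1) : (v : V) ∈ C1 := by
  obtain ⟨p⟩ := hr
  induction p with
  | nil => exact hu
  | cons ha _ ih =>
    rename_i a b c _
    apply ih
    have hbC : (b : V) ∈ C1 ∪ C2 := by rw [h.2.1]; exact b.2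
    rcases hbC with hb1 | hb2
    · exact hb1
    · exact absurd (by exact ha) (h.2.2.2 _ hu _ hb2)

/-- Membership in `C2` propagates along reachability in `G[C]`. -/
private theorem cut_propagate2 {V : Type*} {G : SimpleGraph V} {ρ : V} {C C1 C2 : Set V}
    (h : IsConsistentCut G ρ C C1 C2) {u v : C}
    (hr : (G.induce C).Reachable u v) (hu : (u : V) ∈ C2) : (v : V) ∈ C2 := by
  have hvC : (v : V) ∈ C1 ∪ C2 := by rw [h.2.1]; exact v.2
  rcases hvC with hv1 | hv2
  · exact absurd rfl (h.1.ne_of_mem (cut_propagate h hr.symm hv1) hu)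
  · exact hv2

/-- If `G[C]` is connected, then the only consistent cut is `(C, ∅)`. -/
private theorem cut_of_connected {V : Type*} {G : SimpleGraph V} {ρ : V} {C C1 C2 : Set V}
    (hρ : ρ ∈ C) (hc : (G.induce C).Connected) (h : IsConsistentCut G ρ C C1 C2) :
    C1 = C ∧ C2 = ∅ := by
  have h2 : C2 = ∅ := by
    by_contra hne
    obtain ⟨v, hv⟩ := Set.nonempty_iff_ne_empty.mpr hne
    have hvC : v ∈ C := by rw [← h.2.1]; exact Or.inr hv
    have hreach : (G.induce C).Reachable ⟨ρ, hρ⟩ ⟨v, hvC⟩ := hc ⟨ρ, hρ⟩ ⟨v, hvC⟩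
    have hv1 : v ∈ C1 := cut_propagate h hreach h.2.2.1
    exact h.1.ne_of_mem hv1 hv rfl
  refine ⟨?_, h2⟩
  rw [← h.2.1, h2, Set.union_empty]

/-- The number of consistent cuts of `G[C]` is odd iff `G[C]` is connected; moreover,
in that case the number of consistent cuts is exactly `1`, namely the cut `(C, ∅)`. -/
theorem odd_num_consistent_cuts_iff_connected {V : Type*} [Fintype V]
    (G : SimpleGraph V) (ρ : V) (C : Set V) (hρ : ρ ∈ C) :
    (Odd (Nat.card {p : Set V × Set V // IsConsistentCut G ρ C p.1 p.2}) ↔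
      (G.induce C).Connected) ∧
    ((G.induce C).Connected →
      Nat.card {p : Set V × Set V // IsConsistentCut G ρ C p.1 p.2} = 1 ∧
      IsConsistentCut G ρ C C ∅ ∧
      ∀ C1 C2 : Set V, IsConsistentCut G ρ C C1 C2 → C1 = C ∧ C2 = ∅) := by
  classical
  have hCnil : IsConsistentCut G ρ C C ∅ :=
    ⟨Set.disjoint_empty C, Set.union_empty C, hρ, fun u _ v hv => absurd hv (Set.notMem_empty v)⟩
  -- the "moreover" part
  have hmore : (G.induce C).Connected →
      Nat.card {p : Set V × Set V // IsConsistentCut G ρ C p.1 p.2} = 1 ∧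
      IsConsistentCut G ρ C C ∅ ∧
      ∀ C1 C2 : Set V, IsConsistentCut G ρ C C1 C2 → C1 = C ∧ C2 = ∅ := by
    intro hc
    refine ⟨?_, hCnil, fun C1 C2 h => cut_of_connected hρ hc h⟩
    rw [Nat.card_eq_one_iff_unique]
    constructor
    · constructor
      intro ⟨p, hp⟩ ⟨q, hq⟩
      obtain ⟨hp1, hp2⟩ := cut_of_connected hρ hc hp
      obtain ⟨hq1, hq2⟩ := cut_of_connected hρ hc hq
      ext1
      rw [Prod.ext_iff]
      exact ⟨hp1.trans hq1.symm, hp2.trans hq2.symm⟩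
    · exact ⟨⟨(C, ∅), hCnil⟩⟩
  refine ⟨⟨?_, fun hc => by rw [(hmore hc).1]; exact odd_one⟩, hmore⟩
  -- if not connected, the number of cuts is even
  intro hodd
  by_contra hnc
  rw [← Nat.not_even_iff_odd] at hodd
  apply hodd
  -- find a vertex w ∈ C not reachable from ρ in G[C]
  have hne : Nonempty C := ⟨⟨ρ, hρ⟩⟩
  have hnp : ¬ (G.induce C).Preconnected := fun h => hnc ⟨h⟩
  have hw : ∃ w : C, ¬ (G.induce C).Reachable ⟨ρ, hρ⟩ w := by
    by_contra h
    push_neg at h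
    exact hnp fun u v => (h u).symm.trans (h v)
  obtain ⟨w, hw⟩ := hw
  -- K : the component of w in G[C], as a subset of V
  set K : Set V := {v | ∃ hv : v ∈ C, (G.induce C).Reachable w ⟨v, hv⟩} with hK
  have hwK : (w : V) ∈ K := ⟨w.2, by rfl⟩
  have hρK : ρ ∉ K := fun ⟨_, hr⟩ => hw hr.symm
  have hKC : K ⊆ C := fun v hv => hv.1
  -- K lies entirely inside one side of any cut
  have hside : ∀ C1 C2 : Set V, IsConsistentCut G ρ C C1 C2 →
      ((w : V) ∈ C1 → K ⊆ C1) ∧ ((w : V) ∈ C2 → K ⊆ C2) := by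
    intro C1 C2 h
    exact ⟨fun hw1 v hv => cut_propagate h hv.2 hw1,
      fun hw2 v hv => cut_propagate2 h hv.2 hw2⟩
  -- the involution: toggle K between the two sides
  let T := {p : Set V × Set V // IsConsistentCut G ρ C p.1 p.2}
  let f : T → T := fun ⟨⟨C1, C2⟩, h⟩ =>
    if hw1 : (w : V) ∈ C1 then
      ⟨(C1 \ K, C2 ∪ K), by
        have hKsub : K ⊆ C1 := (hside C1 C2 h).1 hw1
        refine ⟨?_, ?_, ?_, ?_⟩
        · rw [Set.disjoint_union_right]
          exact ⟨h.1.mono_left Set.diff_subset, Set.disjoint_sdiff_left⟩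
        · rw [Set.union_comm C2 K, ← Set.union_assoc, Set.diff_union_of_subset hKsub, h.2.1]
        · exact ⟨h.2.2.1, hρK⟩
        · rintro u ⟨hu1, huK⟩ v hv hadj
          rcases hv with hv2 | hvK
          · exact h.2.2.2 u hu1 v hv2 hadj
          · obtain ⟨hvC, hrv⟩ := hvK
            have huC : u ∈ C := by rw [← h.2.1]; exact Or.inl hu1
            have : (G.induce C).Adj ⟨v, hvC⟩ ⟨u, huC⟩ := by
              simp only [SimpleGraph.comap_adj, Function.Embedding.coe_subtype]
              exact hadj.symm
            exact huK ⟨huC, hrv.trans this.reachable⟩⟩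
    else
      ⟨(C1 ∪ K, C2 \ K), by
        have hw2 : (w : V) ∈ C2 := by
          have hw12 : (w : V) ∈ C1 ∪ C2 := by rw [h.2.1]; exact w.2
          exact hw12.resolve_left hw1
        have hKsub : K ⊆ C2 := (hside C1 C2 h).2 hw2
        refine ⟨?_, ?_, ?_, ?_⟩
        · rw [Set.disjoint_union_left]
          exact ⟨h.1.mono_right Set.diff_subset, Set.disjoint_sdiff_right⟩
        · rw [Set.union_assoc, Set.union_comm K, Set.diff_union_of_subset hKsub, h.2.1]
        · exact Or.inl h.2.2.1
        · rintro u hu v ⟨hv2, hvK⟩ hadj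
          rcases hu with hu1 | huK
          · exact h.2.2.2 u hu1 v hv2 hadj
          · obtain ⟨huC, hru⟩ := huK
            have hvC : v ∈ C := by rw [← h.2.1]; exact Or.inr hv2
            have : (G.induce C).Adj ⟨u, huC⟩ ⟨v, hvC⟩ := by
              simp only [SimpleGraph.comap_adj, Function.Embedding.coe_subtype]
              exact hadj
            exact hvK ⟨hvC, hru.trans this.reachable⟩⟩
  have hinv : Function.Involutive f := by
    rintro ⟨⟨C1, C2⟩, h⟩
    by_cases hw1 : (w : V) ∈ C1
    · have hKsub : K ⊆ C1 := (hside C1 C2 h).1 hw1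
      simp only [f, dif_pos hw1]
      have hw1' : (w : V) ∉ C1 \ K := fun hc => hc.2 hwK
      rw [dif_neg hw1']
      ext1
      rw [Prod.ext_iff]
      constructor
      · exact Set.diff_union_of_subset hKsub
      · show (C2 ∪ K) \ K = C2
        exact Set.union_diff_cancel_right
          ((h.1.mono_left hKsub).symm.inter_eq.le)
    · have hw2 : (w : V) ∈ C2 := by
        have hw12 : (w : V) ∈ C1 ∪ C2 := by rw [h.2.1]; exact w.2
        exact hw12.resolve_left hw1
      have hKsub : K ⊆ C2 := (hside C1 C2 h).2 hw2
      simp only [f, dif_neg hw1]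
      have hw1' : (w : V) ∈ C1 ∪ K := Or.inr hwK
      rw [dif_pos hw1']
      ext1
      rw [Prod.ext_iff]
      constructor
      · show (C1 ∪ K) \ K = C1
        exact Set.union_diff_cancel_right
          ((h.1.mono_right hKsub).inter_eq.le)
      · exact Set.diff_union_of_subset hKsub
  have hfp : ∀ p : T, f p ≠ p := by
    rintro ⟨⟨C1, C2⟩, h⟩ heq
    by_cases hw1 : (w : V) ∈ C1
    · simp only [f, dif_pos hw1] at heq
      have : C1 \ K = C1 := congrArg (Prod.fst ∘ Subtype.val) heq
      rw [← this] at hw1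
      exact hw1.2 hwK
    · simp only [f, dif_neg hw1] at heq
      have : C1 ∪ K = C1 := congrArg (Prod.fst ∘ Subtype.val) heq
      rw [← this] at hw1
      exact hw1 (Or.inr hwK)
  exact even_card_of_fpf_invol f hinv hfp
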